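/- Suppose a sequence {x^k} in ℝⁿ converges to x⋆, ψ(x^k) is nonincreasing with limit ψ̄ = ψ(x⋆), the inequalities ψ(x^k) − ψ(x^{k+1}) ≥ (1/(2α))‖x^{k+1} − x^k‖² and |ψ(x^k) − ψ̄|^θ ≤ cL‖x^{k+1} − x^k‖ hold for all k with constants α, c, L > 0 and θ ∈ [0,1), and ψ(x^k) > ψ̄ for all k. Then Σ_{k=0}^∞ ‖x^{k+1} − x^k‖ ≤ (2αcL/(1−θ))(ψ(x⁰) − ψ̄)^{1−θ}. -/

import Mathlib

open Filter Topology

/-- Concavity estimate for `t ↦ t ^ p`, `0 < p ≤ 1`: the slope bound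
`(a - b) * a ^ (p - 1) ≤ (a ^ p - b ^ p) / p` for `0 < b ≤ a`. -/
lemma bern_slope {a b p : ℝ} (hb : 0 < b) (hba : b ≤ a) (hp0 : 0 < p) (hp1 : p ≤ 1) :
    (a - b) * a ^ (p - 1) ≤ (a ^ p - b ^ p) / p := by
  have ha : 0 < a := hb.trans_le hba
  set t : ℝ := b / a with ht
  have ht0 : 0 < t := div_pos hb ha
  have ht1 : t ≤ 1 := (div_le_one ha).2 hba
  have hbern : (1 + (t - 1)) ^ p ≤ 1 + p * (t - 1) :=
    rpow_one_add_le_one_add_mul_self (by linarith) hp0.le hp1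
  rw [show (1 : ℝ) + (t - 1) = t by ring] at hbern
  have hbt : b = a * t := by rw [ht]; field_simp
  have hbp : b ^ p = a ^ p * t ^ p := by
    rw [hbt, Real.mul_rpow ha.le ht0.le]
  have hap : 0 < a ^ p := Real.rpow_pos_of_pos ha p
  have key : p * ((a - b) * a ^ (p - 1)) ≤ a ^ p - b ^ p := by
    have h1 : a ^ p - b ^ p = a ^ p * (1 - t ^ p) := by rw [hbp]; ring
    have h2 : a ^ (p - 1) = a ^ p / a := by
      rw [Real.rpow_sub ha, Real.rpow_one]
    have h3 : (a - b) * a ^ (p - 1) = a ^ p * (1 - t) := by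
      rw [h2, hbt]; field_simp
    rw [h1, h3]
    nlinarith [hap]
  rw [le_div_iff₀ hp0]
  linarith

/-- Finite length of the iterate trajectory under the KL inequality: if `x^k → x⋆`,
`ψ(x^k)` is nonincreasing with limit `ψ̄ = ψ(x⋆)`, the sufficient-decrease and KL bounds
hold, and `ψ(x^k) > ψ̄` for all `k`, then
`∑ ‖x^{k+1} - x^k‖ ≤ (2αcL/(1-θ))(ψ(x⁰) - ψ̄)^{1-θ}`. -/
theorem finite_length_of_kl {n : ℕ}
    (ψ : EuclideanSpace ℝ (Fin n) → ℝ)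
    (x : ℕ → EuclideanSpace ℝ (Fin n)) (xstar : EuclideanSpace ℝ (Fin n))
    (hx : Tendsto x atTop (𝓝 xstar))
    (hmono : Antitone (fun k => ψ (x k)))
    (hlim : Tendsto (fun k => ψ (x k)) atTop (𝓝 (ψ xstar)))
    (α c L θ : ℝ) (hα : 0 < α) (hc : 0 < c) (hL : 0 < L)
    (hθ0 : 0 ≤ θ) (hθ1 : θ < 1)
    (hdec : ∀ k, (1 / (2 * α)) * ‖x (k + 1) - x k‖ ^ 2 ≤ ψ (x k) - ψ (x (k + 1)))
    (hKL : ∀ k, |ψ (x k) - ψ xstar| ^ θ ≤ c * L * ‖x (k + 1) - x k‖)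
    (hgt : ∀ k, ψ xstar < ψ (x k)) :
    Summable (fun k => ‖x (k + 1) - x k‖) ∧
    (∑' k : ℕ, ‖x (k + 1) - x k‖) ≤
      (2 * α * c * L / (1 - θ)) * (ψ (x 0) - ψ xstar) ^ (1 - θ) := by
  set Δ : ℕ → ℝ := fun k => ψ (x k) - ψ xstar with hΔ
  set d : ℕ → ℝ := fun k => ‖x (k + 1) - x k‖ with hd
  have hΔpos : ∀ k, 0 < Δ k := fun k => sub_pos.2 (hgt k)
  have hΔanti : ∀ k, Δ (k + 1) ≤ Δ k := fun k =>
    sub_le_sub_right (hmono (Nat.le_succ k)) _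
  set p : ℝ := 1 - θ with hp
  have hp0 : 0 < p := by simp only [hp]; linarith
  have hp1 : p ≤ 1 := by simp only [hp]; linarith
  set C : ℝ := 2 * α * c * L / (1 - θ) with hC
  have hC0 : 0 ≤ C := by
    apply div_nonneg _ (by linarith)
    positivity
  have h2α : (0 : ℝ) < 2 * α := by linarith
  have hcL : 0 < c * L := mul_pos hc hL
  -- key per-step bound
  have key : ∀ k, d k ≤ C * (Δ k ^ p - Δ (k + 1) ^ p) := by
    intro k
    have hKLk := hKL k
    rw [abs_of_pos (hΔpos k)] at hKLk
    have hθpos : (0 : ℝ) < Δ k ^ θ := Real.rpow_pos_of_pos (hΔpos k) θ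
    have hd0 : 0 < d k := by
      by_contra h
      push_neg at h
      have : c * L * d k ≤ 0 := mul_nonpos_of_nonneg_of_nonpos hcL.le h
      linarith [hθpos.trans_le hKLk]
    have h' : d k ^ 2 ≤ (ψ (x k) - ψ (x (k + 1))) * (2 * α) := by
      have h := hdec k
      have heq : (1 / (2 * α)) * ‖x (k + 1) - x k‖ ^ 2 = d k ^ 2 / (2 * α) := by
        rw [hd]; ring
      rw [heq] at h
      exact (div_le_iff₀ h2α).mp h
    have hchain : d k * Δ k ^ θ ≤ 2 * α * c * L * (Δ k - Δ (k + 1)) := by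
      calc d k * Δ k ^ θ ≤ d k * (c * L * d k) :=
            mul_le_mul_of_nonneg_left hKLk hd0.le
        _ = c * L * d k ^ 2 := by ring
        _ ≤ c * L * ((ψ (x k) - ψ (x (k + 1))) * (2 * α)) :=
            mul_le_mul_of_nonneg_left h' hcL.le
        _ = 2 * α * c * L * (Δ k - Δ (k + 1)) := by simp only [hΔ]; ring
    have hstep1 : d k ≤ 2 * α * c * L * (Δ k - Δ (k + 1)) * (Δ k ^ θ)⁻¹ := by
      rw [← div_eq_mul_inv, le_div_iff₀ hθpos]
      exact hchain
    have hrw : Δ k ^ (p - 1) = (Δ k ^ θ)⁻¹ := by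
      rw [show p - 1 = -θ by simp only [hp]; ring, Real.rpow_neg (hΔpos k).le]
    have hslope := bern_slope (hΔpos (k + 1)) (hΔanti k) hp0 hp1
    calc d k ≤ 2 * α * c * L * ((Δ k - Δ (k + 1)) * Δ k ^ (p - 1)) := by
          rw [hrw]; linarith [hstep1]
      _ ≤ 2 * α * c * L * ((Δ k ^ p - Δ (k + 1) ^ p) / p) :=
          mul_le_mul_of_nonneg_left hslope (by positivity)
      _ = C * (Δ k ^ p - Δ (k + 1) ^ p) := by rw [hC, hp]; ring
  have hpartial : ∀ N, ∑ k ∈ Finset.range N, d k ≤ C * Δ 0 ^ p := by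
    intro N
    calc ∑ k ∈ Finset.range N, d k
        ≤ ∑ k ∈ Finset.range N, C * (Δ k ^ p - Δ (k + 1) ^ p) :=
          Finset.sum_le_sum fun k _ => key k
      _ = C * (Δ 0 ^ p - Δ N ^ p) := by
          rw [← Finset.mul_sum, Finset.sum_range_sub']
      _ ≤ C * Δ 0 ^ p := by
          have h0 : 0 ≤ Δ N ^ p := (Real.rpow_pos_of_pos (hΔpos N) p).le
          nlinarith
  have hsummable : Summable d :=
    summable_of_sum_range_le (fun k => norm_nonneg _) hpartial
  exact ⟨hsummable, Summable.tsum_le_of_sum_range_le hsummable hpartial⟩
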